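/- arXiv:2410.23752 — 3 statements merged into one kernel-verified Lean document; each statement's English description precedes it below -/
import Mathlib

section
/- Let {η^k, q^k, w^k, p^k, x^k} be the sequences generated by Algorithm 1, let M₁ = ∂(g* ∘ (−I)) and M₂ = ∂f*, and let J₁, J₂ : ℝⁿ → ℝⁿ be resolvent functions of σM₁ and σM₂, i.e. x − Jᵢ(x) ∈ σMᵢ(Jᵢ(x)) for every x ∈ ℝⁿ (i = 1,2). Then for every k ≥ 0 one has w^{k+1} = J₂(η^k) and η^{k+1} = (2J₁ − I)((2J₂ − I)(η^k)); consequently the sequence {η^k} produced by Algorithm 1 coincides with the Peaceman–Rachford fixed-point iteration η^{k+1} = R_{σM₁}R_{σM₂}(η^k) started from the same initial point η⁰. -/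
noncomputable section

open Matrix Filter
open scoped Pointwise

/-- `ℝⁿ` with the Euclidean inner ℝ product and norm. -/
abbrev Vec (n : ℕ) := EuclideanSpace ℝ (Fin n)

/-- Matrix–vector multiplication viewed as a map between Euclidean spaces. -/
def mulVecE {m n : ℕ} (A : Matrix (Fin m) (Fin n) ℝ) (x : Vec n) : Vec m :=
  (EuclideanSpace.equiv (Fin m) ℝ).symm (A.mulVec (EuclideanSpace.equiv (Fin n) ℝ x))

/-- Subdifferential of an `ℝ ∪ {+∞}`-valued (coded as `EReal`-valued) function:
`∂h(x) = {u : ∀ z, h z ≥ h x + ⟨u, z − x⟩}`. -/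
def subdiffE {n : ℕ} (f : Vec n → EReal) (x : Vec n) : Set (Vec n) :=
  {u | ∀ z, f x + ((inner ℝ u (z - x) : ℝ) : EReal) ≤ f z}

/-- Fenchel conjugate `h*(w) = sup_z (⟨w, z⟩ − h z)`. -/
def fenchelE {n : ℕ} (f : Vec n → EReal) (w : Vec n) : EReal :=
  ⨆ z, ((inner ℝ w z : ℝ) : EReal) - f z

/-- Proper: never `−∞` (it takes values in `ℝ ∪ {+∞}`) and not identically `+∞`. -/
def ProperE {n : ℕ} (f : Vec n → EReal) : Prop :=
  (∀ x, f x ≠ ⊥) ∧ ∃ x, f x ≠ ⊤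

/-- Convexity for `EReal`-valued functions. -/
def ConvexE {n : ℕ} (f : Vec n → EReal) : Prop :=
  ∀ x y : Vec n, ∀ a b : ℝ, 0 ≤ a → 0 ≤ b → a + b = 1 →
    f (a • x + b • y) ≤ (a : EReal) * f x + (b : EReal) * f y

/-- `p` is a proximal point of `h` with parameter `s` at `x`, i.e. a minimizer of
`z ↦ h z + (1/(2 s)) ‖z − x‖²`; for proper convex lsc `h` it is the unique such point,
so this characterizes `p = Prox_{s h}(x)`. -/
def IsProxPt {n : ℕ} (h : Vec n → EReal) (s : ℝ) (p x : Vec n) : Prop :=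
  ∀ z, h p + ((1 / (2 * s) * ‖p - x‖ ^ 2 : ℝ) : EReal)
      ≤ h z + ((1 / (2 * s) * ‖z - x‖ ^ 2 : ℝ) : EReal)

/-! ### Auxiliary lemmas -/

section Aux

variable {n : ℕ}

lemma fenchelE_lb {g : Vec n → EReal} {z0 : Vec n} {c0 : ℝ} (h : g z0 = c0) (u : Vec n) :
    ((inner ℝ u z0 - c0 : ℝ) : EReal) ≤ fenchelE g u := by
  have h2 := le_iSup (fun z => ((inner ℝ u z : ℝ) : EReal) - g z) z0
  rw [h] at h2
  rw [EReal.coe_sub]; exact h2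

lemma fenchelE_ne_bot {g : Vec n → EReal} {z0 : Vec n} {c0 : ℝ} (h : g z0 = c0) (u : Vec n) :
    fenchelE g u ≠ ⊥ := by
  intro hb
  have := fenchelE_lb h u
  rw [hb, le_bot_iff] at this
  exact EReal.coe_ne_bot _ this

lemma fenchelE_of_subgrad {g : Vec n → EReal} (hbot : ∀ z, g z ≠ ⊥)
    {p u : Vec n} {c : ℝ} (hgp : g p = c)
    (hsub : ∀ z, ((c + inner ℝ u (z - p) : ℝ) : EReal) ≤ g z) :
    fenchelE g u = ((inner ℝ u p - c : ℝ) : EReal) := by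
  refine le_antisymm (iSup_le fun z => ?_) (fenchelE_lb hgp u)
  by_cases hz : g z = ⊤
  · rw [hz]
    simp [EReal.coe_sub]
  · obtain ⟨d, hd⟩ : ∃ d : ℝ, g z = d := ⟨(g z).toReal, (EReal.coe_toReal hz (hbot z)).symm⟩
    rw [hd, ← EReal.coe_sub, EReal.coe_le_coe_iff]
    have h2 := hsub z
    rw [hd, EReal.coe_le_coe_iff] at h2
    have h3 : (inner ℝ u (z - p) : ℝ) = inner ℝ u z - inner ℝ u p := by
      rw [inner_sub_right]
    linarith [h2, h3.symm.le, h3.le]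

lemma mem_subdiff_fenchel {g : Vec n → EReal} (hbot : ∀ z, g z ≠ ⊥)
    {p u : Vec n} {c : ℝ} (hgp : g p = c)
    (hsub : ∀ z, ((c + inner ℝ u (z - p) : ℝ) : EReal) ≤ g z) :
    p ∈ subdiffE (fenchelE g) u := by
  intro z'
  rw [fenchelE_of_subgrad hbot hgp hsub, ← EReal.coe_add]
  refine le_trans (le_of_eq ?_) (fenchelE_lb hgp z')
  rw [EReal.coe_eq_coe_iff]
  have h1 : (inner ℝ p (z' - u) : ℝ) = inner ℝ p z' - inner ℝ p u := inner_sub_right _ _ _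
  have h2 : (inner ℝ p u : ℝ) = inner ℝ u p := real_inner_comm _ _
  have h3 : (inner ℝ z' p : ℝ) = inner ℝ p z' := real_inner_comm _ _
  linarith

lemma resolvent_unique {h : Vec n → EReal} {σ : ℝ} (hσ : 0 < σ) {u a b : Vec n} {c : ℝ}
    (hha : h a = c) (hbbot : h b ≠ ⊥)
    (ha : u - a ∈ σ • subdiffE h a) (hb : u - b ∈ σ • subdiffE h b) : b = a := by
  obtain ⟨va, hva, hva2⟩ := ha
  obtain ⟨vb, hvb, hvb2⟩ := hb
  have h1 := hvb a
  rw [hha] at h1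
  have hbtop : h b ≠ ⊤ := by
    intro ht
    rw [ht, EReal.top_add_of_ne_bot (EReal.coe_ne_bot _)] at h1
    exact (EReal.coe_lt_top c).not_ge h1
  obtain ⟨d, hd⟩ : ∃ d : ℝ, h b = d := ⟨(h b).toReal, (EReal.coe_toReal hbtop hbbot).symm⟩
  have h2 := hva b
  rw [hha, hd] at h2
  rw [hd] at h1
  rw [← EReal.coe_add, EReal.coe_le_coe_iff] at h1 h2
  have key : σ • (va - vb) = b - a := by
    simp only at hva2 hvb2
    rw [smul_sub, hva2, hvb2]; abel
  have hin : (inner ℝ (σ • (va - vb)) (b - a) : ℝ) = ‖b - a‖ ^ 2 := by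
    rw [key, real_inner_self_eq_norm_sq]
  rw [real_inner_smul_left, inner_sub_left] at hin
  have e1 : (inner ℝ vb (a - b) : ℝ) = - inner ℝ vb (b - a) := by
    rw [← inner_neg_right, neg_sub]
  have hsum : (inner ℝ va (b - a) : ℝ) - inner ℝ vb (b - a) ≤ 0 := by
    have := e1 ▸ h1
    linarith
  have h6 : ‖b - a‖ ^ 2 ≤ 0 := by
    rw [← hin]
    nlinarith
  have h7 : b - a = 0 := by
    have hn := norm_nonneg (b - a)
    have : ‖b - a‖ = 0 := by nlinarith
    exact norm_eq_zero.mp this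
  rw [sub_eq_zero] at h7; exact h7

open Set Topology in
lemma prox_subgrad {g : Vec n → EReal} (hconv : ConvexE g) {σ : ℝ} (hσ : 0 < σ)
    {z0 : Vec n} {c0 : ℝ} (hz0 : g z0 = c0) (hbot : ∀ z, g z ≠ ⊥)
    {p xt : Vec n} (hprox : IsProxPt g σ⁻¹ p xt) :
    ∃ cp : ℝ, g p = cp ∧
      ∀ z, ((cp + inner ℝ (σ • (xt - p)) (z - p) : ℝ) : EReal) ≤ g z := by
  have hC : 1 / (2 * σ⁻¹) = σ / 2 := by field_simp
  have hptop : g p ≠ ⊤ := by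
    intro ht
    have h1 := hprox z0
    rw [ht, hz0, EReal.top_add_of_ne_bot (EReal.coe_ne_bot _), ← EReal.coe_add] at h1
    exact (EReal.coe_lt_top _).not_ge h1
  obtain ⟨cp, hcp⟩ : ∃ cp : ℝ, g p = cp := ⟨(g p).toReal, (EReal.coe_toReal hptop (hbot p)).symm⟩
  refine ⟨cp, hcp, fun z => ?_⟩
  by_cases hz : g z = ⊤
  · rw [hz]; exact le_top
  obtain ⟨d, hd⟩ : ∃ d : ℝ, g z = d := ⟨(g z).toReal, (EReal.coe_toReal hz (hbot z)).symm⟩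
  rw [hd, EReal.coe_le_coe_iff]
  set N : ℝ := ‖z - p‖ ^ 2 with hN
  set I : ℝ := inner ℝ (p - xt) (z - p) with hI
  have hinner : (inner ℝ (σ • (xt - p)) (z - p) : ℝ) = -(σ * I) := by
    rw [real_inner_smul_left]
    have h5 : (inner ℝ (xt - p) (z - p) : ℝ) = -I := by
      rw [hI, ← inner_neg_left, neg_sub]
    rw [h5]; ring
  have key : ∀ t : ℝ, 0 < t → t ≤ 1 →
      cp + inner ℝ (σ • (xt - p)) (z - p) ≤ d + (σ / 2) * t * N := by
    intro t ht0 ht1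
    have hcv := hconv p z (1 - t) t (by linarith) ht0.le (by ring)
    rw [hcp, hd, ← EReal.coe_mul, ← EReal.coe_mul, ← EReal.coe_add] at hcv
    set zt := (1 - t) • p + t • z with hzt
    have hzttop : g zt ≠ ⊤ := fun htp => (EReal.coe_lt_top _).not_ge (htp ▸ hcv)
    obtain ⟨e, he⟩ : ∃ e : ℝ, g zt = e :=
      ⟨(g zt).toReal, (EReal.coe_toReal hzttop (hbot zt)).symm⟩
    have hcv2 : e ≤ (1 - t) * cp + t * d := by
      rw [he, EReal.coe_le_coe_iff] at hcv; exact hcv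
    have hpr := hprox zt
    rw [hcp, he, ← EReal.coe_add, ← EReal.coe_add, EReal.coe_le_coe_iff, hC] at hpr
    have hztxt : zt - xt = (p - xt) + t • (z - p) := by
      rw [hzt]; module
    have hexp : ‖zt - xt‖ ^ 2 = ‖p - xt‖ ^ 2 + 2 * (t * I) + t ^ 2 * N := by
      rw [hztxt, norm_add_sq_real, real_inner_smul_right, norm_smul, hI, hN]
      rw [Real.norm_eq_abs, abs_of_pos ht0]
      ring
    rw [hexp] at hpr
    have hstep : t * cp ≤ t * (d + σ * I + σ / 2 * t * N) := by nlinarith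
    have := (mul_le_mul_iff_right₀ ht0).mp hstep
    rw [hinner]
    linarith
  have htend : Tendsto (fun t : ℝ => d + (σ / 2) * t * N) (𝓝[>] 0) (𝓝 d) := by
    have h8 : Tendsto (fun t : ℝ => d + (σ / 2) * t * N) (𝓝 0) (𝓝 (d + (σ / 2) * 0 * N)) :=
      Continuous.tendsto (by fun_prop) 0
    simpa using h8.mono_left nhdsWithin_le_nhds
  refine ge_of_tendsto htend ?_
  filter_upwards [Ioc_mem_nhdsGT_of_mem ⟨le_refl 0, zero_lt_one⟩] with t ht
  exact key t ht.1 ht.2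

end Aux

/-! ### mulVecE lemmas -/

section MulVecE

def LE' (n : ℕ) : (Fin n → ℝ) ≃ₗ[ℝ] Vec n := (WithLp.linearEquiv 2 ℝ (Fin n → ℝ)).symm

variable {m n : ℕ}

lemma mulVecE_eq' (A : Matrix (Fin m) (Fin n) ℝ) (x : Vec n) :
    mulVecE A x = LE' m (A.mulVec ((LE' n).symm x)) := rfl

lemma mulVecE_addMat (M N : Matrix (Fin m) (Fin n) ℝ) (v : Vec n) :
    mulVecE (M + N) v = mulVecE M v + mulVecE N v := by
  rw [mulVecE_eq', mulVecE_eq', mulVecE_eq', Matrix.add_mulVec, map_add]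

lemma mulVecE_smul_one (σ : ℝ) (v : Vec n) :
    mulVecE (σ • (1 : Matrix (Fin n) (Fin n) ℝ)) v = σ • v := by
  rw [mulVecE_eq', Matrix.smul_mulVec, Matrix.one_mulVec, _root_.map_smul,
    LinearEquiv.apply_symm_apply]

lemma mulVecE_mul {k : ℕ} (M : Matrix (Fin m) (Fin n) ℝ) (N : Matrix (Fin n) (Fin k) ℝ)
    (v : Vec k) : mulVecE (M * N) v = mulVecE M (mulVecE N v) := by
  rw [mulVecE_eq', mulVecE_eq' N, mulVecE_eq' M, LinearEquiv.symm_apply_apply,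
    Matrix.mulVec_mulVec]

lemma mulVecE_sub (A : Matrix (Fin m) (Fin n) ℝ) (u v : Vec n) :
    mulVecE A (u - v) = mulVecE A u - mulVecE A v := by
  rw [mulVecE_eq', mulVecE_eq', mulVecE_eq', map_sub, Matrix.mulVec_sub, map_sub]

lemma mulVecE_cancel {B : Matrix (Fin n) (Fin n) ℝ} (h : IsUnit B.det) (v : Vec n) :
    mulVecE B (mulVecE B⁻¹ v) = v := by
  rw [mulVecE_eq' B⁻¹, mulVecE_eq' B, LinearEquiv.symm_apply_apply, Matrix.mulVec_mulVec,
    Matrix.mul_nonsing_inv _ h, Matrix.one_mulVec, LinearEquiv.apply_symm_apply]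

lemma inner_mulVecE_transpose (A : Matrix (Fin m) (Fin n) ℝ) (u : Vec m) (v : Vec n) :
    (inner ℝ (mulVecE Aᵀ u) v : ℝ) = inner ℝ u (mulVecE A v) := by
  simp only [PiLp.inner_apply, RCLike.inner_apply, conj_trivial]
  show ∑ i, v i * (Aᵀ.mulVec u) i = ∑ i, (A.mulVec v) i * u i
  rw [← dotProduct, ← dotProduct, Matrix.dotProduct_mulVec,
    Matrix.vecMul_transpose]

end MulVecE

/-- Along Algorithm 1 one has `w^{k+1} = J₂(η^k)` and
`η^{k+1} = (2J₁ − I)((2J₂ − I)(η^k))`, where `J₁, J₂` are resolvents of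
`σM₁ = σ∂(g* ∘ (−I))` and `σM₂ = σ∂f*`; consequently the sequence `{η^k}` coincides with
the Peaceman–Rachford fixed-point iteration started from the same initial point. -/
theorem stmt0 {m n : ℕ}
    (A : Matrix (Fin m) (Fin n) ℝ) (y : Vec m) (σ : ℝ) (hσ : 0 < σ)
    (g : Vec n → EReal) (hg_proper : ProperE g) (hg_convex : ConvexE g)
    (hg_lsc : LowerSemicontinuous g)
    (f : Vec n → ℝ) (hf : ∀ v, f v = (1 / 2) * ‖y - mulVecE A v‖ ^ 2)
    (η q w p x : ℕ → Vec n)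
    (hq : ∀ k, q (k + 1) = mulVecE (Aᵀ * A + σ • 1)⁻¹ (mulVecE Aᵀ y + η k))
    (hw : ∀ k, w (k + 1) = η k - σ • q (k + 1))
    (hp : ∀ k, IsProxPt g σ⁻¹ (p (k + 1)) (σ⁻¹ • ((2 * σ) • q (k + 1) - η k)))
    (hx : ∀ k, x (k + 1) = η k + σ • p (k + 1) - (2 * σ) • q (k + 1))
    (hη : ∀ k, η (k + 1) = η k + (2 * σ) • (p (k + 1) - q (k + 1)))
    (M₁ M₂ : Vec n → Set (Vec n))
    (hM₁ : M₁ = subdiffE (fun v => fenchelE g (-v)))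
    (hM₂ : M₂ = subdiffE (fenchelE (fun v => ((f v : ℝ) : EReal))))
    (J₁ J₂ : Vec n → Vec n)
    (hJ₁ : ∀ u, u - J₁ u ∈ σ • M₁ (J₁ u))
    (hJ₂ : ∀ u, u - J₂ u ∈ σ • M₂ (J₂ u)) :
    (∀ k, w (k + 1) = J₂ (η k) ∧
        η (k + 1) = 2 • J₁ (2 • J₂ (η k) - η k) - (2 • J₂ (η k) - η k)) ∧
    (∀ ζ : ℕ → Vec n, ζ 0 = η 0 →
        (∀ k, ζ (k + 1) = 2 • J₁ (2 • J₂ (ζ k) - ζ k) - (2 • J₂ (ζ k) - ζ k)) →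
        ∀ k, ζ k = η k) := by
  obtain ⟨hgbot, z0, hz0top⟩ := hg_proper
  obtain ⟨c0, hz0c⟩ : ∃ c0 : ℝ, g z0 = c0 := ⟨_, (EReal.coe_toReal hz0top (hgbot z0)).symm⟩
  -- invertibility of the regularized normal matrix
  have hB : (Aᵀ * A + σ • (1 : Matrix (Fin n) (Fin n) ℝ)).PosDef := by
    have h1 : (Aᵀ * A).PosSemidef := by
      have h2 := Matrix.posSemidef_conjTranspose_mul_self A
      rwa [Matrix.conjTranspose_eq_transpose_of_trivial] at h2
    have h2 : ((σ • (1 : Matrix (Fin n) (Fin n) ℝ))).PosDef := by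
      rw [Matrix.smul_one_eq_diagonal]
      exact Matrix.posDef_diagonal_iff.mpr fun i => hσ
    exact Matrix.PosDef.posSemidef_add h1 h2
  have hdet : IsUnit (Aᵀ * A + σ • (1 : Matrix (Fin n) (Fin n) ℝ)).det :=
    hB.det_pos.ne'.isUnit
  -- the main per-step claim
  have key : ∀ k, w (k + 1) = J₂ (η k) ∧
      η (k + 1) = 2 • J₁ (2 • J₂ (η k) - η k) - (2 • J₂ (η k) - η k) := by
    intro k
    -- normal equation
    have hq1 : mulVecE Aᵀ (mulVecE A (q (k + 1))) + σ • q (k + 1)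
        = mulVecE Aᵀ y + η k := by
      have h0 : mulVecE (Aᵀ * A + σ • 1) (q (k + 1)) = mulVecE Aᵀ y + η k := by
        rw [hq k, mulVecE_cancel hdet]
      rw [← h0, mulVecE_addMat, mulVecE_mul, mulVecE_smul_one]
    have hw1 : w (k + 1) = mulVecE Aᵀ (mulVecE A (q (k + 1))) - mulVecE Aᵀ y := by
      have hηk : η k = mulVecE Aᵀ (mulVecE A (q (k + 1))) + σ • q (k + 1) - mulVecE Aᵀ y := by
        rw [hq1]; abel
      rw [hw k, hηk]; module
    -- f-subgradient inequality at q (k+1)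
    have hfs : ∀ z, f (q (k + 1)) + inner ℝ (w (k + 1)) (z - q (k + 1)) ≤ f z := by
      intro z
      rw [hf, hf]
      have hiw : (inner ℝ (w (k + 1)) (z - q (k + 1)) : ℝ)
          = inner ℝ (mulVecE A (q (k + 1)) - y) (mulVecE A z - mulVecE A (q (k + 1))) := by
        rw [hw1, ← mulVecE_sub Aᵀ, inner_mulVecE_transpose, mulVecE_sub]
      rw [hiw]
      have hab : y - mulVecE A z
          = (y - mulVecE A (q (k + 1))) - (mulVecE A z - mulVecE A (q (k + 1))) := by abel
      rw [hab]
      set a := y - mulVecE A (q (k + 1)) with ha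
      set b := mulVecE A z - mulVecE A (q (k + 1)) with hb2
      have h1 : (inner ℝ (mulVecE A (q (k + 1)) - y) b : ℝ) = - inner ℝ a b := by
        rw [← inner_neg_left, ha, neg_sub]
      rw [h1]
      have h2 := norm_sub_sq_real a b
      nlinarith [sq_nonneg ‖b‖]
    -- J₂ identification
    have hFsub : ∀ z, ((f (q (k + 1)) + inner ℝ (w (k + 1)) (z - q (k + 1)) : ℝ) : EReal)
        ≤ (fun v => ((f v : ℝ) : EReal)) z :=
      fun z => EReal.coe_le_coe_iff.mpr (hfs z)
    have hFbot : ∀ z, (fun v => ((f v : ℝ) : EReal)) z ≠ ⊥ := fun z => EReal.coe_ne_bot _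
    have mem2 : q (k + 1) ∈ subdiffE (fenchelE (fun v => ((f v : ℝ) : EReal))) (w (k + 1)) :=
      mem_subdiff_fenchel hFbot rfl hFsub
    have hfenw : fenchelE (fun v => ((f v : ℝ) : EReal)) (w (k + 1))
        = ((inner ℝ (w (k + 1)) (q (k + 1)) - f (q (k + 1)) : ℝ) : EReal) :=
      fenchelE_of_subgrad hFbot rfl hFsub
    have hmemw : η k - w (k + 1)
        ∈ σ • subdiffE (fenchelE (fun v => ((f v : ℝ) : EReal))) (w (k + 1)) := by
      have h3 : η k - w (k + 1) = σ • q (k + 1) := by rw [hw k]; module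
      rw [h3]
      exact Set.smul_mem_smul_set mem2
    have hJ2k := hJ₂ (η k)
    rw [hM₂] at hJ2k
    have hw1J : J₂ (η k) = w (k + 1) :=
      resolvent_unique (h := fenchelE (fun v => ((f v : ℝ) : EReal))) (u := η k)
        (a := w (k + 1)) (b := J₂ (η k)) hσ hfenw
        (fenchelE_ne_bot (show (fun v => ((f v : ℝ) : EReal)) 0 = ((f 0 : ℝ) : EReal) from rfl) _)
        hmemw hJ2k
    -- J₁ identification
    obtain ⟨cp, hcp, hsubg⟩ := prox_subgrad hg_convex hσ hz0c hgbot (hp k)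
    have hxt : σ • ((σ⁻¹ • ((2 * σ) • q (k + 1) - η k)) - p (k + 1)) = -(x (k + 1)) := by
      rw [hx k, smul_sub, smul_smul, mul_inv_cancel₀ hσ.ne', one_smul]
      module
    rw [hxt] at hsubg
    have mem1 : p (k + 1) ∈ subdiffE (fenchelE g) (-(x (k + 1))) :=
      mem_subdiff_fenchel hgbot hcp hsubg
    have memH : -(p (k + 1)) ∈ subdiffE (fun v => fenchelE g (-v)) (x (k + 1)) := by
      intro z
      have h6 := mem1 (-z)
      have e : (inner ℝ (p (k + 1)) (-z - -(x (k + 1))) : ℝ)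
          = inner ℝ (-(p (k + 1))) (z - x (k + 1)) := by
        rw [inner_neg_left, show -z - -(x (k + 1)) = -(z - x (k + 1)) by abel, inner_neg_right]
      show fenchelE g (-(x (k + 1))) + _ ≤ fenchelE g (-z)
      rw [← e]
      exact h6
    have hfenH : (fun v => fenchelE g (-v)) (x (k + 1))
        = ((inner ℝ (-(x (k + 1))) (p (k + 1)) - cp : ℝ) : EReal) :=
      fenchelE_of_subgrad hgbot hcp hsubg
    have hζx : (2 • w (k + 1) - η k) - x (k + 1) = σ • (-(p (k + 1))) := by
      rw [hw k, hx k, two_nsmul]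
      module
    have memσH : (2 • w (k + 1) - η k) - x (k + 1)
        ∈ σ • subdiffE (fun v => fenchelE g (-v)) (x (k + 1)) := by
      rw [hζx]
      exact Set.smul_mem_smul_set memH
    have hJ1k := hJ₁ (2 • w (k + 1) - η k)
    rw [hM₁] at hJ1k
    have hx1J : J₁ (2 • w (k + 1) - η k) = x (k + 1) :=
      resolvent_unique (h := fun v => fenchelE g (-v)) (u := 2 • w (k + 1) - η k)
        (a := x (k + 1)) (b := J₁ (2 • w (k + 1) - η k)) hσ hfenH
        (fenchelE_ne_bot (g := g) hz0c (-(J₁ (2 • w (k + 1) - η k)))) memσH hJ1k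
    refine ⟨hw1J.symm, ?_⟩
    rw [hw1J, hx1J, hη k, hx k, hw k, two_nsmul, two_nsmul]
    module
  refine ⟨key, fun ζ h0 hstep => ?_⟩
  intro k
  induction k with
  | zero => exact h0
  | succ k ih => rw [hstep k, ih, ← (key k).2]
end
end

section
/- Let H be a real Hilbert space, let F : H → H be β-Lipschitz with 0 ≤ β < 1 and fixed point η* = F(η*), and let T : H → H satisfy the relative approximation bound ‖T(x) − F(x)‖ ≤ ρ‖x‖ for all x ∈ H, where ρ ≥ 0 and β + ρ < 1. Then the iterates η^{k+1} = T(η^k) satisfy, for every k ≥ 0, ‖η^k − η*‖ ≤ (β + ρ)^k ‖η⁰ − η*‖ + ρ‖η*‖/(1 − β − ρ); in particular the iterates converge at a linear rate to the ball of radius ρ‖η*‖/(1 − β − ρ) around η*. -/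
/-- Let `F` be `β`-Lipschitz on a real Hilbert space with `0 ≤ β < 1` and fixed
point `η*`, and let `T` satisfy the relative approximation bound `‖T x − F x‖ ≤ ρ‖x‖` with
`ρ ≥ 0` and `β + ρ < 1`. Then the iterates `η^{k+1} = T(η^k)` satisfy
`‖η^k − η*‖ ≤ (β + ρ)^k ‖η⁰ − η*‖ + ρ‖η*‖/(1 − β − ρ)` for every `k ≥ 0`. -/
theorem stmt3 {H : Type*} [NormedAddCommGroup H] [InnerProductSpace ℝ H]
    (F T : H → H) (β ρ : ℝ) (hβ0 : 0 ≤ β) (hβ1 : β < 1) (hρ0 : 0 ≤ ρ) (hβρ : β + ρ < 1)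
    (hF : ∀ x y : H, ‖F x - F y‖ ≤ β * ‖x - y‖)
    (ηstar : H) (hfix : ηstar = F ηstar)
    (hT : ∀ x : H, ‖T x - F x‖ ≤ ρ * ‖x‖)
    (η : ℕ → H) (hiter : ∀ k, η (k + 1) = T (η k)) :
    ∀ k : ℕ, ‖η k - ηstar‖ ≤ (β + ρ) ^ k * ‖η 0 - ηstar‖ + ρ * ‖ηstar‖ / (1 - β - ρ) := by
  have hden : 0 < 1 - β - ρ := by linarith
  have hC : (β + ρ) * (ρ * ‖ηstar‖ / (1 - β - ρ)) + ρ * ‖ηstar‖ =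
      ρ * ‖ηstar‖ / (1 - β - ρ) := by
    field_simp
    ring
  -- one-step bound
  have step : ∀ k, ‖η (k + 1) - ηstar‖ ≤ (β + ρ) * ‖η k - ηstar‖ + ρ * ‖ηstar‖ := by
    intro k
    have h1 : ‖η (k + 1) - ηstar‖ ≤ ‖T (η k) - F (η k)‖ + ‖F (η k) - ηstar‖ := by
      rw [hiter k]
      calc ‖T (η k) - ηstar‖ = ‖(T (η k) - F (η k)) + (F (η k) - ηstar)‖ := by rw [sub_add_sub_cancel]
        _ ≤ _ := norm_add_le _ _
    have h2 : ‖F (η k) - ηstar‖ ≤ β * ‖η k - ηstar‖ := by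
      calc ‖F (η k) - ηstar‖ = ‖F (η k) - F ηstar‖ := by rw [← hfix]
        _ ≤ β * ‖η k - ηstar‖ := hF _ _
    have h3 : ‖η k‖ ≤ ‖η k - ηstar‖ + ‖ηstar‖ := by
      calc ‖η k‖ = ‖(η k - ηstar) + ηstar‖ := by rw [sub_add_cancel]
        _ ≤ _ := norm_add_le _ _
    have h4 : ‖T (η k) - F (η k)‖ ≤ ρ * (‖η k - ηstar‖ + ‖ηstar‖) :=
      (hT _).trans (by nlinarith)
    nlinarith
  intro k
  induction k with
  | zero => simp; positivity
  | succ k ih =>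
    have hpow : (0:ℝ) ≤ (β + ρ) ^ k := by positivity
    calc ‖η (k + 1) - ηstar‖ ≤ (β + ρ) * ‖η k - ηstar‖ + ρ * ‖ηstar‖ := step k
      _ ≤ (β + ρ) * ((β + ρ) ^ k * ‖η 0 - ηstar‖ + ρ * ‖ηstar‖ / (1 - β - ρ))
          + ρ * ‖ηstar‖ := by nlinarith
      _ = (β + ρ) ^ (k + 1) * ‖η 0 - ηstar‖ + ρ * ‖ηstar‖ / (1 - β - ρ) := by
          rw [mul_add, add_assoc, hC]; ring
end

section
/- Let H be a real Hilbert space, let L₁, L₂, L₃ : H → H each be α-Lipschitz, let P, R : H → H satisfy ‖R(x) − P(x)‖ ≤ ε for all x ∈ H, and set F = L₃ ∘ L₂ ∘ P ∘ L₁ and T = L₃ ∘ L₂ ∘ R ∘ L₁. Assume F is β-Lipschitz with 0 ≤ β < 1. If η* is a fixed point of F and η_R is a fixed point of T, then ‖η_R − η*‖ ≤ α²ε/(1 − β). -/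
/-- Let `L₁, L₂, L₃` be `α`-Lipschitz maps of a real Hilbert space, let `P, R`
satisfy `‖R x − P x‖ ≤ ε` for all `x`, and set `F = L₃ ∘ L₂ ∘ P ∘ L₁`,
`T = L₃ ∘ L₂ ∘ R ∘ L₁`. If `F` is `β`-Lipschitz with `0 ≤ β < 1`, `η*` is a fixed point of `F`
and `η_R` is a fixed point of `T`, then `‖η_R − η*‖ ≤ α²ε/(1 − β)`. -/
theorem stmt6 {H : Type*} [NormedAddCommGroup H] [InnerProductSpace ℝ H]
    (L₁ L₂ L₃ P R : H → H) (α ε β : ℝ)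
    (hL₁ : ∀ x y : H, ‖L₁ x - L₁ y‖ ≤ α * ‖x - y‖)
    (hL₂ : ∀ x y : H, ‖L₂ x - L₂ y‖ ≤ α * ‖x - y‖)
    (hL₃ : ∀ x y : H, ‖L₃ x - L₃ y‖ ≤ α * ‖x - y‖)
    (hPR : ∀ x : H, ‖R x - P x‖ ≤ ε)
    (F T : H → H) (hFdef : F = L₃ ∘ L₂ ∘ P ∘ L₁) (hTdef : T = L₃ ∘ L₂ ∘ R ∘ L₁)
    (hβ0 : 0 ≤ β) (hβ1 : β < 1)
    (hF : ∀ x y : H, ‖F x - F y‖ ≤ β * ‖x - y‖)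
    (ηstar : H) (hstar : F ηstar = ηstar)
    (ηR : H) (hR : T ηR = ηR) :
    ‖ηR - ηstar‖ ≤ α ^ 2 * ε / (1 - β) := by
  have hε : 0 ≤ ε := le_trans (norm_nonneg _) (hPR ηR)
  have hβ' : 0 < 1 - β := by linarith
  by_cases hα : 0 ≤ α
  · have key : ‖T ηR - F ηR‖ ≤ α ^ 2 * ε := by
      simp only [hFdef, hTdef, Function.comp_apply]
      calc ‖L₃ (L₂ (R (L₁ ηR))) - L₃ (L₂ (P (L₁ ηR)))‖
          ≤ α * ‖L₂ (R (L₁ ηR)) - L₂ (P (L₁ ηR))‖ := hL₃ _ _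
        _ ≤ α * (α * ‖R (L₁ ηR) - P (L₁ ηR)‖) :=
            mul_le_mul_of_nonneg_left (hL₂ _ _) hα
        _ ≤ α * (α * ε) := by
            gcongr
            exact hPR _
        _ = α ^ 2 * ε := by ring
    have h2 : ‖ηR - ηstar‖ ≤ α ^ 2 * ε + β * ‖ηR - ηstar‖ := by
      have hdecomp : ηR - ηstar = (T ηR - F ηR) + (F ηR - F ηstar) := by
        rw [hR, hstar]; abel
      calc ‖ηR - ηstar‖ = ‖(T ηR - F ηR) + (F ηR - F ηstar)‖ := by rw [← hdecomp]
        _ ≤ ‖T ηR - F ηR‖ + ‖F ηR - F ηstar‖ := norm_add_le _ _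
        _ ≤ α ^ 2 * ε + β * ‖ηR - ηstar‖ := add_le_add key (hF _ _)
    rw [le_div_iff₀ hβ']
    nlinarith [norm_nonneg (ηR - ηstar)]
  · push_neg at hα
    have heq : ηR = ηstar := by
      by_contra hne
      have h1 : (0:ℝ) < ‖ηR - ηstar‖ := by
        rw [norm_pos_iff]; exact sub_ne_zero.mpr hne
      have h2 := hL₁ ηR ηstar
      nlinarith [norm_nonneg (L₁ ηR - L₁ ηstar)]
    rw [heq, sub_self, norm_zero]
    positivity
end
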